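/- arXiv:1108.5123 — 7 statements merged into one kernel-verified Lean document; each statement's English description precedes it below -/
import Mathlib

section
/- Every regularly preordered space has a closed preorder, i.e., the graph {(x,y) : x ≤ y} is closed in E × E. -/
open Set

def IsIncreasingSet {E : Type*} [Preorder E] (S : Set E) : Prop :=
  ∀ ⦃x⦄, x ∈ S → ∀ ⦃y⦄, x ≤ y → y ∈ S
def IsDecreasingSet {E : Type*} [Preorder E] (S : Set E) : Prop :=
  ∀ ⦃x⦄, x ∈ S → ∀ ⦃y⦄, y ≤ x → y ∈ S

def SemiclosedPreordered (E : Type*) [TopologicalSpace E] [Preorder E] : Prop :=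
  ∀ x : E, IsClosed {y | x ≤ y} ∧ IsClosed {y | y ≤ x}

def RegularlyPreordered (E : Type*) [TopologicalSpace E] [Preorder E] : Prop :=
  SemiclosedPreordered E ∧
  (∀ (x : E) (B : Set E), IsClosed B → IsIncreasingSet B → x ∉ B →
    ∃ U V : Set E, IsOpen U ∧ IsDecreasingSet U ∧ IsOpen V ∧ IsIncreasingSet V ∧
      x ∈ U ∧ B ⊆ V ∧ Disjoint U V) ∧
  (∀ (y : E) (A : Set E), IsClosed A → IsDecreasingSet A → y ∉ A →
    ∃ U V : Set E, IsOpen U ∧ IsDecreasingSet U ∧ IsOpen V ∧ IsIncreasingSet V ∧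
      y ∈ V ∧ A ⊆ U ∧ Disjoint U V)

theorem regularlyPreordered_implies_closed_graph
    (E : Type*) [TopologicalSpace E] [Preorder E]
    (h : RegularlyPreordered E) :
    IsClosed {p : E × E | p.1 ≤ p.2} := by
  obtain ⟨hsc, hreg, -⟩ := h
  rw [← isOpen_compl_iff]
  rw [isOpen_iff_forall_mem_open]
  rintro ⟨x, y⟩ hxy
  simp only [mem_compl_iff, mem_setOf_eq] at hxy
  have hBclosed : IsClosed {z | x ≤ z} := (hsc x).1
  have hBinc : IsIncreasingSet {z | x ≤ z} := fun a ha b hab => le_trans ha hab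
  obtain ⟨U, V, hUo, hUd, hVo, hVi, hyU, hBV, hdisj⟩ := hreg y _ hBclosed hBinc hxy
  refine ⟨V ×ˢ U, ?_, hVo.prod hUo, ⟨hBV le_rfl, hyU⟩⟩
  rintro ⟨a, b⟩ ⟨haV, hbU⟩
  simp only [mem_compl_iff, mem_setOf_eq]
  intro hab
  exact hdisj.ne_of_mem hbU (hVi haV hab) rfl
end

section
/- Let E be a topological preordered space and suppose local convexity holds at x ∈ E (every neighborhood of x contains a convex neighborhood of x). Then the equivalence class [x] = i(x) ∩ d(x) is compact, and every open neighborhood of x contains [x]. -/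
open Set Topology

def IsOrderConvexSet {E : Type*} [Preorder E] (S : Set E) : Prop :=
  ∃ A B : Set E, IsIncreasingSet A ∧ IsDecreasingSet B ∧ S = A ∩ B

theorem locallyConvexAt_implies_class_compact
    {E : Type*} [TopologicalSpace E] [Preorder E] (x : E)
    (hconv : ∀ O ∈ 𝓝 x, ∃ C ∈ 𝓝 x, IsOrderConvexSet C ∧ C ⊆ O) :
    IsCompact {y : E | x ≤ y ∧ y ≤ x} ∧
      ∀ O : Set E, IsOpen O → x ∈ O → {y : E | x ≤ y ∧ y ≤ x} ⊆ O := by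
  have key : ∀ O ∈ 𝓝 x, {y : E | x ≤ y ∧ y ≤ x} ⊆ O := by
    intro O hO
    obtain ⟨C, hC, ⟨A, B, hA, hB, rfl⟩, hsub⟩ := hconv O hO
    have hx : x ∈ A ∩ B := mem_of_mem_nhds hC
    intro y hy
    exact hsub ⟨hA hx.1 hy.1, hB hx.2 hy.2⟩
  constructor
  · apply isCompact_of_finite_subcover
    intro ι U hU hcov
    have hxmem : x ∈ ⋃ i, U i := hcov ⟨le_refl x, le_refl x⟩
    obtain ⟨i, hi⟩ := mem_iUnion.1 hxmem
    refine ⟨{i}, ?_⟩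
    have : {y : E | x ≤ y ∧ y ≤ x} ⊆ U i :=
      key _ ((hU i).mem_nhds hi)
    intro y hy
    simpa using this hy
  · intro O hO hxO
    exact key O (hO.mem_nhds hxO)
end

section
/- If E is a locally convex topological preordered space, then every open set O ⊆ E is saturated with respect to the quotient map π : E → E/∼ (i.e., π⁻¹(π(O)) = O); consequently π is an open, closed, proper quasi-homeomorphism. -/
open Set Topology

/-- the quotient topology on `E/∼` -/
instance {E : Type*} [TopologicalSpace E] [Preorder E] :
    TopologicalSpace (Antisymmetrization E (· ≤ ·)) :=
  inferInstanceAs (TopologicalSpace (Quotient (AntisymmRel.setoid E (· ≤ ·))))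

lemma quotientMap_toAntisymmetrization {E : Type*} [TopologicalSpace E] [Preorder E] :
    IsQuotientMap (toAntisymmetrization (α := E) (· ≤ ·)) :=
  isQuotientMap_quotient_mk'

lemma sat_open {E : Type*} [TopologicalSpace E] [Preorder E]
    (hconv : ∀ x : E, ∀ O ∈ 𝓝 x, ∃ C ∈ 𝓝 x, IsOrderConvexSet C ∧ C ⊆ O)
    {O : Set E} (hO : IsOpen O) :
    (toAntisymmetrization (α := E) (· ≤ ·)) ⁻¹'
      ((toAntisymmetrization (α := E) (· ≤ ·)) '' O) = O := by
  apply Subset.antisymm _ (subset_preimage_image _ _)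
  rintro x ⟨y, hy, hxy⟩
  have h : AntisymmRel (· ≤ ·) y x := Quotient.exact hxy
  obtain ⟨C, hC, ⟨A, B, hA, hB, rfl⟩, hCO⟩ := hconv y O (hO.mem_nhds hy)
  have hyC : y ∈ A ∩ B := mem_of_mem_nhds hC
  exact hCO ⟨hA hyC.1 h.1, hB hyC.2 h.2⟩

lemma sat_closed {E : Type*} [TopologicalSpace E] [Preorder E]
    (hconv : ∀ x : E, ∀ O ∈ 𝓝 x, ∃ C ∈ 𝓝 x, IsOrderConvexSet C ∧ C ⊆ O)
    {C : Set E} (hC : IsClosed C) :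
    (toAntisymmetrization (α := E) (· ≤ ·)) ⁻¹'
      ((toAntisymmetrization (α := E) (· ≤ ·)) '' C) = C := by
  apply Subset.antisymm _ (subset_preimage_image _ _)
  rintro x ⟨y, hy, hxy⟩
  by_contra hx
  have := sat_open hconv hC.isOpen_compl
  have : y ∈ Cᶜ := by
    rw [← this]
    exact ⟨x, hx, Quotient.sound (Quotient.exact hxy).symm⟩
  exact this hy

theorem locallyConvex_quotient_quasiHomeomorphism
    {E : Type*} [TopologicalSpace E] [Preorder E]
    (hconv : ∀ x : E, ∀ O ∈ 𝓝 x, ∃ C ∈ 𝓝 x, IsOrderConvexSet C ∧ C ⊆ O) :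
    (∀ O : Set E, IsOpen O →
      (toAntisymmetrization (α := E) (· ≤ ·)) ⁻¹'
        ((toAntisymmetrization (α := E) (· ≤ ·)) '' O) = O) ∧
    IsOpenMap (toAntisymmetrization (α := E) (· ≤ ·)) ∧
    IsClosedMap (toAntisymmetrization (α := E) (· ≤ ·)) ∧
    (∀ K : Set (Antisymmetrization E (· ≤ ·)), IsCompact K →
      IsCompact ((toAntisymmetrization (α := E) (· ≤ ·)) ⁻¹' K)) ∧
    (∀ C : Set E, IsClosed C →
      (toAntisymmetrization (α := E) (· ≤ ·)) ⁻¹'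
        (closure ((toAntisymmetrization (α := E) (· ≤ ·)) '' C)) = C) ∧
    (∀ F : Set (Antisymmetrization E (· ≤ ·)), IsClosed F →
      closure ((toAntisymmetrization (α := E) (· ≤ ·)) ''
        ((toAntisymmetrization (α := E) (· ≤ ·)) ⁻¹' F)) = F) := by
  set π := toAntisymmetrization (α := E) (· ≤ ·)
  have hq : IsQuotientMap π := quotientMap_toAntisymmetrization
  have hsurj : Function.Surjective π := hq.surjective
  have hopen : IsOpenMap π := by
    intro O hO
    rw [hq.isOpen_preimage.symm, sat_open hconv hO]
    exact hO
  have hclosed : IsClosedMap π := by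
    intro C hC
    rw [← isOpen_compl_iff, hq.isOpen_preimage.symm, preimage_compl,
      sat_closed hconv hC]
    exact hC.isOpen_compl
  refine ⟨fun O hO => sat_open hconv hO, hopen, hclosed, ?_, ?_, ?_⟩
  · intro K hK
    rw [isCompact_iff_finite_subcover]
    intro ι 𝒰 h𝒰 hcover
    rw [isCompact_iff_finite_subcover] at hK
    have hcov2 : K ⊆ ⋃ i, π '' 𝒰 i := by
      intro k hk
      obtain ⟨x, rfl⟩ := hsurj k
      obtain ⟨i, hi⟩ := by simpa using hcover hk
      simpa using ⟨i, x, hi, rfl⟩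
    obtain ⟨s, hs⟩ := hK (fun i => π '' 𝒰 i) (fun i => hopen _ (h𝒰 i)) hcov2
    refine ⟨s, fun x hx => ?_⟩
    obtain ⟨i, hi, y, hy, hyx⟩ := by simpa using hs hx
    have : x ∈ π ⁻¹' (π '' 𝒰 i) := ⟨y, hy, hyx⟩
    rw [sat_open hconv (h𝒰 i)] at this
    simpa using ⟨i, hi, this⟩
  · intro C hC
    rw [((hclosed _ hC).closure_eq), sat_closed hconv hC]
  · intro F hF
    rw [image_preimage_eq _ hsurj, hF.closure_eq]
end

section
/- If E is a locally convex closed preordered space (the graph of ≤ is closed and E is locally convex), then the quotient order ≲ on E/∼ is closed: its graph is closed in (E/∼) × (E/∼). -/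
open Set Topology

theorem quotient_order_closed_of_locallyConvex_closedPreorder
    {E : Type*} [TopologicalSpace E] [Preorder E]
    (hclosed : IsClosed {p : E × E | p.1 ≤ p.2})
    (hconv : ∀ x : E, ∀ O ∈ 𝓝 x, ∃ C ∈ 𝓝 x, IsOrderConvexSet C ∧ C ⊆ O) :
    IsClosed {p : Antisymmetrization E (· ≤ ·) × Antisymmetrization E (· ≤ ·) |
      p.1 ≤ p.2} := by
  -- every open set is saturated under the antisymm relation
  have hsat : ∀ O : Set E, IsOpen O → ∀ z w : E, AntisymmRel (· ≤ ·) z w → w ∈ O → z ∈ O := by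
    intro O hO z w hzw hwO
    obtain ⟨C, hCnhds, ⟨A, B, hA, hB, rfl⟩, hCO⟩ := hconv w O (hO.mem_nhds hwO)
    have hwC : w ∈ A ∩ B := mem_of_mem_nhds hCnhds
    exact hCO ⟨hA hwC.1 hzw.2, hB hwC.2 hzw.1⟩
  rw [← isOpen_compl_iff, isOpen_prod_iff]
  intro a b hab
  obtain ⟨x, rfl⟩ := Quotient.exists_rep a
  obtain ⟨y, rfl⟩ := Quotient.exists_rep b
  have hxy : ¬ x ≤ y := hab
  obtain ⟨U, V, hU, hV, hxU, hyV, hUV⟩ :=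
    isOpen_prod_iff.1 hclosed.isOpen_compl x y hxy
  have himg : ∀ (W : Set E), IsOpen W →
      IsOpen (Quotient.mk (AntisymmRel.setoid E (· ≤ ·)) '' W) := by
    intro W hW
    rw [isOpen_coinduced (f := Quotient.mk (AntisymmRel.setoid E (· ≤ ·)))]
    have : Quotient.mk (AntisymmRel.setoid E (· ≤ ·)) ⁻¹'
        (Quotient.mk (AntisymmRel.setoid E (· ≤ ·)) '' W) = W := by
      ext z
      constructor
      · rintro ⟨w, hwW, hw⟩
        exact hsat W hW z w (Quotient.exact hw.symm) hwW
      · intro hz; exact ⟨z, hz, rfl⟩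
    rwa [this]
  refine ⟨Quotient.mk _ '' U, Quotient.mk _ '' V, himg U hU, himg V hV,
    ⟨x, hxU, rfl⟩, ⟨y, hyV, rfl⟩, ?_⟩
  rintro ⟨p, q⟩ ⟨⟨u, huU, rfl⟩, ⟨v, hvV, rfl⟩⟩ hle
  exact hUV (Set.mk_mem_prod huU hvV) (hle : u ≤ v)
end

section
/- In a locally convex semiclosed preordered space E, the relation ∼ (x ∼ y iff x ≤ y and y ≤ x) coincides with topological indistinguishability (x and y have the same closure), so the quotient π : E → E/∼ is the Kolmogorov (T₀) quotient; moreover E/∼ is T₁. -/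
open Set Topology

theorem locallyConvex_semiclosed_quotient_is_T0_quotient
    {E : Type*} [TopologicalSpace E] [Preorder E]
    (hsemi : ∀ x : E, IsClosed {y | x ≤ y} ∧ IsClosed {y | y ≤ x})
    (hconv : ∀ x : E, ∀ O ∈ 𝓝 x, ∃ C ∈ 𝓝 x, IsOrderConvexSet C ∧ C ⊆ O) :
    (∀ x y : E, (x ≤ y ∧ y ≤ x) ↔ Inseparable x y) ∧
      T1Space (Antisymmetrization E (· ≤ ·)) := by
  have key : ∀ x y : E, x ≤ y → y ≤ x → x ⤳ y := by
    intro x y hxy hyx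
    rw [specializes_iff_forall_open]
    intro s hs hys
    obtain ⟨C, hC, ⟨A, B, hA, hB, rfl⟩, hCs⟩ := hconv y s (hs.mem_nhds hys)
    have hyC : y ∈ A ∩ B := mem_of_mem_nhds hC
    exact hCs ⟨hA hyC.1 hyx, hB hyC.2 hxy⟩
  constructor
  · intro x y
    constructor
    · rintro ⟨hxy, hyx⟩
      exact inseparable_iff_specializes_and.2 ⟨key x y hxy hyx, key y x hyx hxy⟩
    · intro h
      have h1 : x ∈ {z | z ≤ y} :=
        (specializes_iff_forall_closed.1 h.specializes' {z | z ≤ y} (hsemi y).2) le_rfl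
      have h2 : x ∈ {z | y ≤ z} :=
        (specializes_iff_forall_closed.1 h.specializes' {z | y ≤ z} (hsemi y).1) le_rfl
      exact ⟨h1, h2⟩
  · constructor
    intro a
    induction a using Quotient.ind with
    | _ x =>
      have hq := isQuotientMap_quotient_mk' (s := AntisymmRel.setoid E (· ≤ ·))
      refine (hq.isClosed_preimage (s := {Quotient.mk _ x})).1 ?_
      have : (@Quotient.mk' E (AntisymmRel.setoid E (· ≤ ·))) ⁻¹'
          {Quotient.mk _ x} = {z | z ≤ x} ∩ {z | x ≤ z} := by
        ext z
        simp only [Set.mem_preimage, Set.mem_singleton_iff, Set.mem_inter_iff, Set.mem_setOf_eq]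
        exact ⟨fun h => Quotient.exact h,
          fun h => Quotient.sound (a := z) (b := x) (s := AntisymmRel.setoid E (· ≤ ·)) h⟩
      rw [this]
      exact (hsemi x).2.inter (hsemi x).1
end

section
/- If E is a locally convex semiclosed preordered space whose preorder is closed (graph closed in E × E), then the quotient E/∼ is a Hausdorff space. -/
open Set Topology

/-- Under local convexity, every open set is saturated for `∼`. -/
lemma open_saturated {E : Type*} [TopologicalSpace E] [Preorder E]
    (hconv : ∀ x : E, ∀ O ∈ 𝓝 x, ∃ C ∈ 𝓝 x, IsOrderConvexSet C ∧ C ⊆ O)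
    {O : Set E} (hO : IsOpen O) {o z : E} (ho : o ∈ O)
    (h1 : o ≤ z) (h2 : z ≤ o) : z ∈ O := by
  obtain ⟨C, hC, ⟨A, B, hA, hB, rfl⟩, hCO⟩ := hconv o O (hO.mem_nhds ho)
  have hc : o ∈ A ∩ B := mem_of_mem_nhds hC
  exact hCO ⟨hA hc.1 h1, hB hc.2 h2⟩

lemma sep_aux {E : Type*} [TopologicalSpace E] [Preorder E]
    (hclosed : IsClosed {p : E × E | p.1 ≤ p.2})
    (hconv : ∀ x : E, ∀ O ∈ 𝓝 x, ∃ C ∈ 𝓝 x, IsOrderConvexSet C ∧ C ⊆ O)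
    {x y : E} (h : ¬ x ≤ y) :
    ∃ U V : Set (Antisymmetrization E (· ≤ ·)), IsOpen U ∧ IsOpen V ∧
      Quotient.mk (AntisymmRel.setoid E (· ≤ ·)) x ∈ U ∧ Quotient.mk (AntisymmRel.setoid E (· ≤ ·)) y ∈ V ∧
      Disjoint U V := by
  have hopen : IsOpen {p : E × E | p.1 ≤ p.2}ᶜ := hclosed.isOpen_compl
  obtain ⟨U, V, hU, hV, hxU, hyV, hUV⟩ :=
    isOpen_prod_iff.mp hopen x y h
  have hne : ∀ u ∈ U, ∀ v ∈ V, ¬ u ≤ v := fun u hu v hv huv =>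
    hUV (Set.mk_mem_prod hu hv) huv
  refine ⟨Quotient.mk (AntisymmRel.setoid E (· ≤ ·)) '' U, Quotient.mk (AntisymmRel.setoid E (· ≤ ·)) '' V, ?_, ?_, ?_, ?_, ?_⟩
  · refine (show (IsOpen (Quotient.mk (AntisymmRel.setoid E (· ≤ ·)) '' U)) ↔
        IsOpen (Quotient.mk (AntisymmRel.setoid E (· ≤ ·)) ⁻¹'
          (Quotient.mk (AntisymmRel.setoid E (· ≤ ·)) '' U)) from isOpen_coinduced).mpr ?_
    have : Quotient.mk (AntisymmRel.setoid E (· ≤ ·)) ⁻¹'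
        (Quotient.mk (AntisymmRel.setoid E (· ≤ ·)) '' U) = U := by
      ext z
      constructor
      · rintro ⟨u, hu, huz⟩
        have : AntisymmRel (· ≤ ·) u z := Quotient.exact huz
        exact open_saturated hconv hU hu this.1 this.2
      · intro hz; exact ⟨z, hz, rfl⟩
    rw [this]; exact hU
  · refine (show (IsOpen (Quotient.mk (AntisymmRel.setoid E (· ≤ ·)) '' V)) ↔
        IsOpen (Quotient.mk (AntisymmRel.setoid E (· ≤ ·)) ⁻¹'
          (Quotient.mk (AntisymmRel.setoid E (· ≤ ·)) '' V)) from isOpen_coinduced).mpr ?_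
    have : Quotient.mk (AntisymmRel.setoid E (· ≤ ·)) ⁻¹'
        (Quotient.mk (AntisymmRel.setoid E (· ≤ ·)) '' V) = V := by
      ext z
      constructor
      · rintro ⟨v, hv, hvz⟩
        have : AntisymmRel (· ≤ ·) v z := Quotient.exact hvz
        exact open_saturated hconv hV hv this.1 this.2
      · intro hz; exact ⟨z, hz, rfl⟩
    rw [this]; exact hV
  · exact ⟨x, hxU, rfl⟩
  · exact ⟨y, hyV, rfl⟩
  · rw [Set.disjoint_left]
    rintro q ⟨u, hu, hq⟩ ⟨v, hv, hq'⟩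
    have : AntisymmRel (· ≤ ·) u v := Quotient.exact (hq.trans hq'.symm)
    exact hne u hu v hv this.1

theorem locallyConvex_semiclosed_closedPreorder_quotient_T2
    {E : Type*} [TopologicalSpace E] [Preorder E]
    (hsemi : ∀ x : E, IsClosed {y | x ≤ y} ∧ IsClosed {y | y ≤ x})
    (hclosed : IsClosed {p : E × E | p.1 ≤ p.2})
    (hconv : ∀ x : E, ∀ O ∈ 𝓝 x, ∃ C ∈ 𝓝 x, IsOrderConvexSet C ∧ C ⊆ O) :
    T2Space (Antisymmetrization E (· ≤ ·)) := by
  constructor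
  intro a b hab
  induction a using Quotient.inductionOn with | _ x =>
  induction b using Quotient.inductionOn with | _ y =>
  have hxy : ¬ AntisymmRel (· ≤ ·) x y := fun h => hab (Quotient.sound h)
  rw [AntisymmRel] at hxy
  push_neg at hxy
  by_cases hle : x ≤ y
  · obtain ⟨V, U, hV, hU, hyV, hxU, hUV⟩ := sep_aux hclosed hconv (hxy hle)
    exact ⟨U, V, hU, hV, hxU, hyV, hUV.symm⟩
  · obtain ⟨U, V, hU, hV, hxU, hyV, hUV⟩ := sep_aux hclosed hconv hle
    exact ⟨U, V, hU, hV, hxU, hyV, hUV⟩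
end

section
/- Let E be a second countable locally compact space equipped with a locally convex closed preorder. Then E is pseudo-metrizable, i.e., its topology is induced by a pseudo-metric. -/
open Set Topology

theorem pseudoMetrizable_of_secondCountable_locallyCompact_locallyConvex_closedPreorder
    (E : Type*) [TopologicalSpace E] [Preorder E] [SecondCountableTopology E]
    (hloc : ∀ x : E, ∃ K : Set E, IsCompact K ∧ K ∈ 𝓝 x)
    (hconv : ∀ x : E, ∀ O ∈ 𝓝 x, ∃ C ∈ 𝓝 x, IsOrderConvexSet C ∧ C ⊆ O)
    (hclosed : IsClosed {p : E × E | p.1 ≤ p.2}) :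
    TopologicalSpace.PseudoMetrizableSpace E := by
  -- If the neighborhood filters of `x` and `y` are not disjoint, then `x ≤ y`.
  have key : ∀ x y : E, ¬ Disjoint (𝓝 x) (𝓝 y) → x ≤ y := by
    intro x y hd
    have hne : (𝓝 x ⊓ 𝓝 y).NeBot := ⟨fun h => hd (disjoint_iff.2 h)⟩
    have htend : Filter.Tendsto (fun z : E => (z, z)) (𝓝 x ⊓ 𝓝 y) (𝓝 (x, y)) := by
      rw [nhds_prod_eq]
      exact Filter.Tendsto.prodMk (Filter.tendsto_id.mono_left inf_le_left)
        (Filter.tendsto_id.mono_left inf_le_right)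
    have hmem : (x, y) ∈ closure {p : E × E | p.1 ≤ p.2} :=
      mem_closure_of_tendsto htend (Filter.Eventually.of_forall fun z => le_refl z)
    exact hclosed.closure_subset hmem
  -- If `x ≤ y ≤ x`, then `x` specializes to `y` (and conversely), using local convexity.
  have hspec : ∀ x y : E, x ≤ y → y ≤ x → x ⤳ y := by
    intro x y hxy hyx
    rw [specializes_iff_forall_open]
    intro s hs hys
    obtain ⟨C, hC, ⟨A, B, hA, hB, rfl⟩, hCs⟩ := hconv y s (hs.mem_nhds hys)
    obtain ⟨hyA, hyB⟩ := mem_of_mem_nhds hC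
    exact hCs ⟨hA hyA hyx, hB hyB hxy⟩
  have : R1Space E := by
    constructor
    intro x y
    by_cases hd : Disjoint (𝓝 x) (𝓝 y)
    · exact Or.inr hd
    · exact Or.inl (hspec x y (key x y hd) (key y x fun h => hd h.symm))
  have : WeaklyLocallyCompactSpace E := by
    constructor
    intro x
    obtain ⟨K, hK, hKx⟩ := hloc x
    exact ⟨K, hK, hKx⟩
  infer_instance
end
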